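/- Let R > 0 and let y ∈ ℝ³ with 0 < ‖y‖ < R, and set ȳ = (R²/‖y‖²) y. Then for every x ∈ ℝ³ with ‖x‖ ≤ R one has R² − ⟨x, y⟩ + ‖y‖·‖x − ȳ‖ ≥ 2R(R − ‖y‖) > 0. In particular the argument of the logarithm in the regular part of the Neumann function of the ball is strictly positive on the closed ball. -/

import Mathlib

open Real
open scoped RealInnerProductSpace

/-- Positivity of the argument of the logarithm in the regular part of the Neumann
function of the ball: for `0 < ‖y‖ < R`, `ȳ = (R²/‖y‖²) y` and every `x` with `‖x‖ ≤ R`,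
`R² − ⟨x, y⟩ + ‖y‖·‖x − ȳ‖ ≥ 2R(R − ‖y‖) > 0`. -/
theorem log_argument_positive (R : ℝ) (hR : 0 < R)
    (y : EuclideanSpace ℝ (Fin 3)) (hy0 : 0 < ‖y‖) (hyR : ‖y‖ < R)
    (x : EuclideanSpace ℝ (Fin 3)) (hx : ‖x‖ ≤ R) :
    2 * R * (R - ‖y‖) ≤ R ^ 2 - ⟪x, y⟫ + ‖y‖ * ‖x - (R ^ 2 / ‖y‖ ^ 2) • y‖ ∧
      0 < 2 * R * (R - ‖y‖) := by
  set c : ℝ := R ^ 2 / ‖y‖ ^ 2 with hc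
  have hcpos : 0 < c := by positivity
  have h1 : ‖x - c • y‖ ^ 2 = ‖x‖ ^ 2 - 2 * (c * ⟪x, y⟫) + (c * ‖y‖) ^ 2 := by
    rw [@norm_sub_sq_real, real_inner_smul_right, norm_smul, Real.norm_eq_abs,
      abs_of_pos hcpos]
  have hcy : c * ‖y‖ ^ 2 = R ^ 2 := by
    rw [hc, div_mul_cancel₀ _ (by positivity)]
  have ht0 : 0 ≤ ‖y‖ * ‖x - c • y‖ := by positivity
  have ht2 : (‖y‖ * ‖x - c • y‖) ^ 2
      = ‖y‖ ^ 2 * ‖x‖ ^ 2 - 2 * R ^ 2 * ⟪x, y⟫ + (R ^ 2) ^ 2 := by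
    have hy2 : (‖y‖:ℝ) ≠ 0 := ne_of_gt hy0
    rw [mul_pow, h1, hc]
    field_simp
  have hcauchy : ⟪x, y⟫ ≤ ‖x‖ * ‖y‖ := real_inner_le_norm x y
  have hcauchy2 : ⟪x, y⟫ ^ 2 ≤ ‖x‖ ^ 2 * ‖y‖ ^ 2 := by
    have h := abs_real_inner_le_norm x y
    nlinarith [abs_nonneg ⟪x, y⟫, le_abs_self ⟪x,y⟫, neg_abs_le ⟪x,y⟫]
  constructor
  · have key : R ^ 2 - 2 * R * ‖y‖ + ⟪x, y⟫ ≤ ‖y‖ * ‖x - c • y‖ := by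
      rcases le_or_gt (R ^ 2 - 2 * R * ‖y‖ + ⟪x, y⟫) 0 with h | h
      · linarith
      · nlinarith [ht2, hcauchy2, hcauchy, mul_nonneg (norm_nonneg x) (norm_nonneg y),
          mul_le_mul_of_nonneg_right hx (norm_nonneg y)]
    linarith
  · nlinarith
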